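/- Assume: φ ∈ C([0,∞)) ∩ C¹((0,∞)) with φ(0) = 0, φ > 0 and φ' > 0 on (0,∞); l ∈ C([0,∞)) with l > 0 on [0,∞) and s ↦ s·φ'(s)/l(s) integrable on (0,1); f ∈ C(ℝ) with f(0) = 0, f > 0 on (0,∞), and f C-increasing on (0,η₀) for some η₀ > 0 and C ≥ 1. Let T > 0, ℘ ∈ C¹([0,T]) with ℘ > 0 and ℘' ≥ 0 on (0,T), and a ∈ C([0,T]) with a > 0. Let η ∈ (0,η₀) and let w ∈ C¹([0,T]) satisfy: w'(0) = 0, w(T) = η, 0 ≤ w ≤ η, w' ≥ 0 on [0,T], and t ↦ ℘(t)·φ(w'(t)) differentiable on (0,T) with derivative ℘(t)·a(t)·f(w(t))·l(|w'(t)|). If w(0) = 0, then the Keller–Osserman condition (KO₀) holds: ∫₀^ε ds/K⁻¹(F(s)) < ∞ for some ε ∈ (0,η₀), where K(t) = ∫₀^t s·φ'(s)/l(s) ds and F(t) = ∫₀^t f(s) ds. -/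

import Mathlib

open Set MeasureTheory intervalIntegral

/-- Given `C ≥ 1`, a function `h` is `C`-increasing on `I` if
`sup {h s : s ∈ I, s ≤ t} ≤ C * h t` for every `t ∈ I`. -/
def CIncreasingOn (C : ℝ) (h : ℝ → ℝ) (I : Set ℝ) : Prop :=
  ∀ s ∈ I, ∀ t ∈ I, s ≤ t → h s ≤ C * h t

/-- Proposition 3.11: if a solution of the mixed problem
`[℘ φ(w')]' = ℘ a f(w) l(|w'|)`, `w'(0)=0`, `w(T)=η`, with `℘' ≥ 0`, satisfies
`w(0) = 0`, then the Keller–Osserman condition (KO₀) holds. -/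
lemma aux_F_double (C η₀ : ℝ) (hC : 1 ≤ C) (f : ℝ → ℝ) (hfc : Continuous f)
    (hf0 : f 0 = 0) (hfnn : ∀ t : ℝ, 0 ≤ t → 0 ≤ f t)
    (hfCinc : CIncreasingOn C f (Ioo 0 η₀))
    (F : ℝ → ℝ) (hF : ∀ t, F t = ∫ s in (0:ℝ)..t, f s) :
    ∀ u ∈ Ioo (0:ℝ) η₀, (1 + C⁻¹ * C⁻¹) * F (u / 2) ≤ F u := by
  intro u hu
  have hC0 : (0:ℝ) < C := lt_of_lt_of_le one_pos hC
  have hu0 : 0 < u := hu.1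
  have huη : u < η₀ := hu.2
  have hu2 : 0 < u / 2 := by linarith
  have hu2η : u / 2 < η₀ := by linarith
  have hfI : ∀ a b : ℝ, IntervalIntegrable f volume a b := fun a b => hfc.intervalIntegrable a b
  have hfu2 : 0 ≤ f (u / 2) := hfnn _ hu2.le
  have I1 : F (u / 2) ≤ u / 2 * (C * f (u / 2)) := by
    rw [hF]
    calc ∫ s in (0:ℝ)..(u / 2), f s ≤ ∫ _ in (0:ℝ)..(u / 2), C * f (u / 2) := by
          apply intervalIntegral.integral_mono_on hu2.le (hfI _ _) intervalIntegrable_const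
          intro x hx
          rcases eq_or_lt_of_le hx.1 with h | h
          · rw [← h, hf0]; positivity
          · exact hfCinc x ⟨h, lt_of_le_of_lt hx.2 hu2η⟩ (u / 2) ⟨hu2, hu2η⟩ hx.2
      _ = u / 2 * (C * f (u / 2)) := by
          rw [intervalIntegral.integral_const, smul_eq_mul]; ring
  have I2 : u / 2 * (C⁻¹ * f (u / 2)) ≤ F u - F (u / 2) := by
    have hsplit : F u - F (u / 2) = ∫ s in (u / 2)..u, f s := by
      rw [hF, hF, ← intervalIntegral.integral_add_adjacent_intervals (hfI 0 (u / 2)) (hfI (u / 2) u)]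
      ring
    rw [hsplit]
    calc u / 2 * (C⁻¹ * f (u / 2)) = ∫ _ in (u / 2)..u, C⁻¹ * f (u / 2) := by
          rw [intervalIntegral.integral_const, smul_eq_mul]; ring
      _ ≤ ∫ s in (u / 2)..u, f s := by
          apply intervalIntegral.integral_mono_on (by linarith) intervalIntegrable_const (hfI _ _)
          intro x hx
          have hx0 : 0 < x := lt_of_lt_of_le hu2 hx.1
          have hxη : x < η₀ := lt_of_le_of_lt hx.2 huη
          have h := hfCinc (u / 2) ⟨hu2, hu2η⟩ x ⟨hx0, hxη⟩ hx.1
          rw [inv_mul_le_iff₀ hC0]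
          exact h
  have h1 : C⁻¹ * F (u / 2) ≤ u / 2 * f (u / 2) := by
    have h := mul_le_mul_of_nonneg_left I1 (inv_nonneg.mpr hC0.le)
    have hcc : C⁻¹ * C = 1 := inv_mul_cancel₀ hC0.ne'
    have he : C⁻¹ * (u / 2 * (C * f (u / 2))) = C⁻¹ * C * (u / 2 * f (u / 2)) := by ring
    rw [hcc, one_mul] at he
    linarith [h, he.le]
  have h2 := mul_le_mul_of_nonneg_left h1 (inv_nonneg.mpr hC0.le)
  have h3 : C⁻¹ * (u / 2 * f (u / 2)) = u / 2 * (C⁻¹ * f (u / 2)) := by ring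
  nlinarith [h2, I2, h3]

lemma aux_F_iter (C η₀ : ℝ) (hC : 1 ≤ C) (f : ℝ → ℝ) (hfc : Continuous f)
    (hf0 : f 0 = 0) (hfnn : ∀ t : ℝ, 0 ≤ t → 0 ≤ f t)
    (hfCinc : CIncreasingOn C f (Ioo 0 η₀))
    (F : ℝ → ℝ) (hF : ∀ t, F t = ∫ s in (0:ℝ)..t, f s)
    (hFnn : ∀ t : ℝ, 0 ≤ t → 0 ≤ F t) :
    ∀ (n : ℕ), ∀ u ∈ Ioo (0:ℝ) η₀, (1 + C⁻¹ * C⁻¹) ^ n * F (u / 2 ^ n) ≤ F u := by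
  have hC0 : (0:ℝ) < C := lt_of_lt_of_le one_pos hC
  have hc0 : (0:ℝ) ≤ 1 + C⁻¹ * C⁻¹ := by positivity
  intro n
  induction n with
  | zero => intro u hu; simp
  | succ n ih =>
    intro u hu
    have hu0 : 0 < u := hu.1
    have h2n : (1:ℝ) ≤ 2 ^ n := one_le_pow₀ (by norm_num)
    have hun : u / 2 ^ n ∈ Ioo (0:ℝ) η₀ := by
      constructor
      · positivity
      · calc u / 2 ^ n ≤ u / 1 := by
              apply div_le_div_of_nonneg_left hu0.le one_pos h2n
          _ = u := div_one u
          _ < η₀ := hu.2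
    have hd := aux_F_double C η₀ hC f hfc hf0 hfnn hfCinc F hF (u / 2 ^ n) hun
    have heq : u / 2 ^ n / 2 = u / 2 ^ (n + 1) := by ring
    rw [heq] at hd
    calc (1 + C⁻¹ * C⁻¹) ^ (n + 1) * F (u / 2 ^ (n + 1))
        = (1 + C⁻¹ * C⁻¹) ^ n * ((1 + C⁻¹ * C⁻¹) * F (u / 2 ^ (n + 1))) := by ring
      _ ≤ (1 + C⁻¹ * C⁻¹) ^ n * F (u / 2 ^ n) := by
          apply mul_le_mul_of_nonneg_left hd (pow_nonneg hc0 n)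
      _ ≤ F u := ih u hu

set_option maxHeartbeats 2000000 in
theorem stmt_8
    (φ φ' l : ℝ → ℝ)
    (hφc : ContinuousOn φ (Ici 0)) (hφ0 : φ 0 = 0)
    (hφpos : ∀ t : ℝ, 0 < t → 0 < φ t)
    (hφd : ∀ t : ℝ, 0 < t → HasDerivAt φ (φ' t) t)
    (hφ'c : ContinuousOn φ' (Ioi 0))
    (hφ'pos : ∀ t : ℝ, 0 < t → 0 < φ' t)
    (hlc : ContinuousOn l (Ici 0)) (hlpos : ∀ t ∈ Ici (0:ℝ), 0 < l t)
    (hint : IntegrableOn (fun s => s * φ' s / l s) (Ioo 0 1))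
    (C η₀ : ℝ) (hC : 1 ≤ C) (hη₀ : 0 < η₀)
    (f : ℝ → ℝ) (hfc : Continuous f) (hf0 : f 0 = 0)
    (hfpos : ∀ t : ℝ, 0 < t → 0 < f t)
    (hfCinc : CIncreasingOn C f (Ioo 0 η₀))
    (T : ℝ) (hT : 0 < T)
    (p p' : ℝ → ℝ)
    (hpd : ∀ t ∈ Icc (0:ℝ) T, HasDerivWithinAt p (p' t) (Icc 0 T) t)
    (hp'c : ContinuousOn p' (Icc (0:ℝ) T))
    (hppos : ∀ t ∈ Icc (0:ℝ) T, 0 < p t)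
    (hp'nn : ∀ t ∈ Ioo (0:ℝ) T, 0 ≤ p' t)
    (a : ℝ → ℝ) (hac : ContinuousOn a (Icc (0:ℝ) T))
    (hapos : ∀ t ∈ Icc (0:ℝ) T, 0 < a t)
    (η : ℝ) (hη : η ∈ Ioo (0:ℝ) η₀)
    (w w' : ℝ → ℝ)
    (hwd : ∀ t ∈ Icc (0:ℝ) T, HasDerivWithinAt w (w' t) (Icc 0 T) t)
    (hw'c : ContinuousOn w' (Icc (0:ℝ) T))
    (hw'0 : w' 0 = 0) (hwT : w T = η)
    (hwrange : ∀ t ∈ Icc (0:ℝ) T, 0 ≤ w t ∧ w t ≤ η ∧ 0 ≤ w' t)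
    (hODE : ∀ t ∈ Ioo (0:ℝ) T,
      HasDerivAt (fun s => p s * φ (w' s)) (p t * a t * f (w t) * l |w' t|) t)
    (F K Kinv : ℝ → ℝ)
    (hF : ∀ t, F t = ∫ s in (0:ℝ)..t, f s)
    (hK : ∀ t, K t = ∫ s in (0:ℝ)..t, s * φ' s / l s)
    (hKinv : ∀ t : ℝ, 0 ≤ t → Kinv (K t) = t)
    (hw00 : w 0 = 0) :
    ∃ ε ∈ Ioo (0:ℝ) η₀, IntegrableOn (fun s => 1 / Kinv (F s)) (Ioo 0 ε) := by
  -- notation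
  set gK : ℝ → ℝ := fun s => s * φ' s / l s with hgK
  -- basic continuity
  have hwc : ContinuousOn w (Icc 0 T) := fun t ht => (hwd t ht).continuousWithinAt
  have hpc : ContinuousOn p (Icc 0 T) := fun t ht => (hpd t ht).continuousWithinAt
  have hw'nn : ∀ t ∈ Icc (0:ℝ) T, 0 ≤ w' t := fun t ht => (hwrange t ht).2.2
  have hwnn : ∀ t ∈ Icc (0:ℝ) T, 0 ≤ w t := fun t ht => (hwrange t ht).1
  have hfwnn : ∀ t ∈ Icc (0:ℝ) T, 0 ≤ f (w t) := by
    intro t ht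
    rcases eq_or_lt_of_le (hwnn t ht) with h | h
    · rw [← h, hf0]
    · exact (hfpos _ h).le
  -- interior derivatives
  have hwD : ∀ t ∈ Ioo (0:ℝ) T, HasDerivAt w (w' t) t := fun t ht =>
    (hwd t (Ioo_subset_Icc_self ht)).hasDerivAt (Icc_mem_nhds ht.1 ht.2)
  have hpD : ∀ t ∈ Ioo (0:ℝ) T, HasDerivAt p (p' t) t := fun t ht =>
    (hpd t (Ioo_subset_Icc_self ht)).hasDerivAt (Icc_mem_nhds ht.1 ht.2)
  -- w is monotone on [0, T]
  have hwmono : MonotoneOn w (Icc 0 T) := by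
    apply monotoneOn_of_deriv_nonneg (convex_Icc _ _) hwc
    · rw [interior_Icc]
      exact fun x hx => (hwD x hx).differentiableAt.differentiableWithinAt
    · rw [interior_Icc]
      intro x hx
      rw [(hwD x hx).deriv]
      exact hw'nn x (Ioo_subset_Icc_self hx)
  -- the last zero of w
  set S : Set ℝ := Icc 0 T ∩ w ⁻¹' {0} with hS
  have hS0 : (0:ℝ) ∈ S := ⟨left_mem_Icc.mpr hT.le, hw00⟩
  have hScl : IsClosed S := hwc.preimage_isClosed_of_isClosed isClosed_Icc isClosed_singleton
  have hScpt : IsCompact S := IsCompact.of_isClosed_subset isCompact_Icc hScl inter_subset_left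
  set t₀ := sSup S with ht₀def
  have ht₀S : t₀ ∈ S := hScpt.sSup_mem ⟨0, hS0⟩
  have ht₀Icc : t₀ ∈ Icc (0:ℝ) T := ht₀S.1
  have hwt₀ : w t₀ = 0 := ht₀S.2
  have ht₀0 : 0 ≤ t₀ := ht₀Icc.1
  have ht₀T : t₀ < T := by
    rcases eq_or_lt_of_le ht₀Icc.2 with h | h
    · exfalso; rw [h, hwT] at hwt₀; exact hη.1.ne' hwt₀
    · exact h
  have hwpos : ∀ t, t₀ < t → t ≤ T → 0 < w t := by
    intro t h1 h2
    rcases eq_or_lt_of_le (hwnn t ⟨le_trans ht₀0 h1.le, h2⟩) with h | h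
    · have hmem : t ∈ S := ⟨⟨le_trans ht₀0 h1.le, h2⟩, h.symm⟩
      exact absurd (le_csSup hScpt.bddAbove hmem) (not_le.mpr h1)
    · exact h
  -- w' t₀ = 0
  have hw't₀ : w' t₀ = 0 := by
    rcases eq_or_lt_of_le ht₀0 with h | h
    · rw [← h]; exact hw'0
    · have hzero : ∀ x ∈ Icc (0:ℝ) t₀, w x = 0 := by
        intro x hx
        have h1 : w x ≤ w t₀ := hwmono ⟨hx.1, le_trans hx.2 ht₀Icc.2⟩ ht₀Icc hx.2
        have h2 : 0 ≤ w x := hwnn x ⟨hx.1, le_trans hx.2 ht₀Icc.2⟩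
        rw [hwt₀] at h1; linarith
      have h1 : HasDerivWithinAt w (w' t₀) (Icc 0 t₀) t₀ :=
        (hwd t₀ ht₀Icc).mono (Icc_subset_Icc_right ht₀Icc.2)
      have h2 : HasDerivWithinAt (fun _ : ℝ => (0:ℝ)) (w' t₀) (Icc 0 t₀) t₀ :=
        h1.congr (fun x hx => (hzero x hx).symm) (hzero t₀ (right_mem_Icc.mpr ht₀0)).symm
      have h3 : HasDerivWithinAt (fun _ : ℝ => (0:ℝ)) 0 (Icc 0 t₀) t₀ :=
        hasDerivWithinAt_const t₀ _ 0
      have hu : UniqueDiffWithinAt ℝ (Icc (0:ℝ) t₀) t₀ :=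
        (uniqueDiffOn_Icc h) t₀ (right_mem_Icc.mpr ht₀0)
      rw [← h2.derivWithin hu, h3.derivWithin hu]
  -- the function t ↦ p t * φ (w' t)
  set Ppw : ℝ → ℝ := fun t => p t * φ (w' t) with hPpw
  have hφw'c : ContinuousOn (fun t => φ (w' t)) (Icc 0 T) :=
    hφc.comp hw'c (fun t ht => hw'nn t ht)
  have hPpwc : ContinuousOn Ppw (Icc 0 T) := hpc.mul hφw'c
  have hlpos' : ∀ t ∈ Icc (0:ℝ) T, 0 < l |w' t| := fun t ht =>
    hlpos _ (abs_nonneg (w' t))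
  -- Ppw is monotone on [0, T]
  have hPpwmono : MonotoneOn Ppw (Icc 0 T) := by
    apply monotoneOn_of_deriv_nonneg (convex_Icc _ _) hPpwc
    · rw [interior_Icc]
      exact fun x hx => (hODE x hx).differentiableAt.differentiableWithinAt
    · rw [interior_Icc]
      intro x hx
      rw [(hODE x hx).deriv]
      have hx' : x ∈ Icc (0:ℝ) T := Ioo_subset_Icc_self hx
      have := hppos x hx'
      have := hapos x hx'
      have := hfwnn x hx'
      have := hlpos' x hx'
      positivity
  -- Ppw is strictly monotone on [t₀, T]
  have hPpwsm : StrictMonoOn Ppw (Icc t₀ T) := by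
    apply strictMonoOn_of_deriv_pos (convex_Icc _ _)
      (hPpwc.mono (Icc_subset_Icc ht₀0 le_rfl))
    rw [interior_Icc]
    intro x hx
    have hx' : x ∈ Ioo (0:ℝ) T := ⟨lt_of_le_of_lt ht₀0 hx.1, hx.2⟩
    rw [(hODE x hx').deriv]
    have hxIcc : x ∈ Icc (0:ℝ) T := Ioo_subset_Icc_self hx'
    have h1 := hppos x hxIcc
    have h2 := hapos x hxIcc
    have h3 := hfpos _ (hwpos x hx.1 hx.2.le)
    have h4 := hlpos' x hxIcc
    positivity
  -- w' is positive on (t₀, T)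
  have hw'pos : ∀ t, t₀ < t → t < T → 0 < w' t := by
    intro t h1 h2
    have hlt : Ppw t₀ < Ppw t :=
      hPpwsm (left_mem_Icc.mpr ht₀Icc.2) ⟨h1.le, h2.le⟩ h1
    have h0 : Ppw t₀ = 0 := by
      simp only [hPpw, hw't₀, hφ0, mul_zero]
    rw [h0] at hlt
    have htIcc : t ∈ Icc (0:ℝ) T := ⟨le_trans ht₀0 h1.le, h2.le⟩
    have hφpos' : 0 < φ (w' t) := by
      by_contra hcon
      push_neg at hcon
      have : Ppw t ≤ 0 := mul_nonpos_of_nonneg_of_nonpos (hppos t htIcc).le hcon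
      linarith
    rcases eq_or_lt_of_le (hw'nn t htIcc) with h | h
    · exfalso; rw [← h, hφ0] at hφpos'; exact lt_irrefl 0 hφpos'
    · exact h
  -- maxima of a and w'
  obtain ⟨tA, htA, hA0'⟩ := isCompact_Icc.exists_isMaxOn
    (nonempty_Icc.mpr hT.le) hac
  have hA0 : ∀ t ∈ Icc (0:ℝ) T, a t ≤ a tA := fun t ht => hA0' ht
  set A := max (a tA) 1 with hAdef
  have hA1 : (1:ℝ) ≤ A := le_max_right _ _
  have hAa : ∀ t ∈ Icc (0:ℝ) T, a t ≤ A := fun t ht => le_trans (hA0 t ht) (le_max_left _ _)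
  obtain ⟨tM, htM, hM0'⟩ := isCompact_Icc.exists_isMaxOn
    (nonempty_Icc.mpr hT.le) hw'c
  have hM0 : ∀ t ∈ Icc (0:ℝ) T, w' t ≤ w' tM := fun t ht => hM0' ht
  set M := max (w' tM) 1 with hMdef
  have hM1 : (1:ℝ) ≤ M := le_max_right _ _
  have hMw' : ∀ t ∈ Icc (0:ℝ) T, w' t ≤ M := fun t ht => le_trans (hM0 t ht) (le_max_left _ _)
  -- integrability of gK
  have hgc : ContinuousOn gK (Ioi 0) := by
    apply ContinuousOn.div
    · exact continuousOn_id.mul hφ'c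
    · exact hlc.mono Ioi_subset_Ici_self
    · exact fun x hx => (hlpos x (mem_Ici.mpr (le_of_lt hx))).ne'
  have hgnn : ∀ s : ℝ, 0 ≤ s → 0 ≤ gK s := by
    intro s hs
    rcases eq_or_lt_of_le hs with h | h
    · simp [hgK, ← h]
    · exact (div_pos (mul_pos h (hφ'pos s h)) (hlpos s hs)).le
  have hgposs : ∀ s : ℝ, 0 < s → 0 < gK s := fun s h =>
    div_pos (mul_pos h (hφ'pos s h)) (hlpos s h.le)
  have hgInt : ∀ N : ℝ, IntegrableOn gK (Icc 0 N) := by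
    intro N
    have h1 : IntegrableOn gK (Ioo 0 1) := hint
    have h2 : IntegrableOn gK (Icc (1/2) (max 1 N)) := by
      apply (hgc.mono _).integrableOn_compact isCompact_Icc
      intro x hx
      have : (0:ℝ) < 1/2 := by norm_num
      exact lt_of_lt_of_le this hx.1
    have h0 : IntegrableOn gK {0} := by
      refine (integrableOn_singleton_iff).mpr (Or.inr ?_)
      simp
    apply (((h0.union h1).union h2).mono_set _)
    intro x hx
    rcases eq_or_lt_of_le hx.1 with h | h
    · exact Or.inl (Or.inl (by simp [← h]))
    · rcases lt_or_ge x (1/2) with h' | h'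
      · exact Or.inl (Or.inr ⟨h, by linarith⟩)
      · exact Or.inr ⟨h', le_trans hx.2 (le_max_right _ _)⟩
  have hgII : ∀ x y : ℝ, 0 ≤ x → x ≤ y → IntervalIntegrable gK volume x y := by
    intro x y hx hxy
    have : IntegrableOn gK (Icc x y) :=
      (hgInt y).mono_set (Icc_subset_Icc hx le_rfl)
    rw [← uIcc_of_le hxy] at this
    exact this.intervalIntegrable
  -- K facts
  have hK0 : K 0 = 0 := by rw [hK]; simp
  have hKder : ∀ y : ℝ, 0 < y → HasDerivAt K (gK y) y := by
    intro y hy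
    have hKfun : K = fun y => ∫ s in (0:ℝ)..y, gK s := funext hK
    rw [hKfun]
    exact intervalIntegral.integral_hasDerivAt_right (hgII 0 y le_rfl hy.le)
      (hgc.stronglyMeasurableAtFilter isOpen_Ioi y hy)
      (hgc.continuousAt (Ioi_mem_nhds hy))
  have hKsm : StrictMonoOn K (Ici 0) := by
    intro x hx y hy hxy
    have hsub : K y - K x = ∫ s in x..y, gK s := by
      rw [hK, hK, ← intervalIntegral.integral_add_adjacent_intervals
        (hgII 0 x le_rfl hx) (hgII x y hx hxy.le)]
      ring
    have hpos : 0 < ∫ s in x..y, gK s := by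
      apply intervalIntegral.intervalIntegral_pos_of_pos_on (hgII x y hx hxy.le)
      · exact fun s hs => hgposs s (lt_of_le_of_lt hx hs.1)
      · exact hxy
    linarith [hsub ▸ hpos]
  have hKcontOn : ∀ N : ℝ, ContinuousOn K (Icc 0 N) := by
    intro N
    have h := intervalIntegral.continuousOn_primitive (μ := volume) (f := gK) (a := 0) (b := N)
      (hgInt N)
    apply h.congr
    intro x hx
    rw [hK, intervalIntegral.integral_of_le hx.1]
  -- F facts
  have hFD : ∀ y : ℝ, HasDerivAt F (f y) y := by
    intro y
    have hFfun : F = fun y => ∫ s in (0:ℝ)..y, f s := funext hF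
    rw [hFfun]
    exact intervalIntegral.integral_hasDerivAt_right (hfc.intervalIntegrable 0 y)
      (hfc.stronglyMeasurableAtFilter volume _)
      hfc.continuousAt
  have hFcont : Continuous F := by
    have : Differentiable ℝ F := fun y => (hFD y).differentiableAt
    exact this.continuous
  have hF0 : F 0 = 0 := by rw [hF]; simp
  have hFpos : ∀ s : ℝ, 0 < s → 0 < F s := by
    intro s hs
    have hsub : F s = ∫ x in (0:ℝ)..s, f x := hF s
    have hpos : 0 < ∫ x in (0:ℝ)..s, f x := by
      apply intervalIntegral.intervalIntegral_pos_of_pos_on (hfc.intervalIntegrable 0 s)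
      · exact fun x hx => hfpos x hx.1
      · exact hs
    linarith [hsub ▸ hpos]
  have hFnn : ∀ s : ℝ, 0 ≤ s → 0 ≤ F s := by
    intro s hs
    rcases eq_or_lt_of_le hs with h | h
    · rw [← h, hF0]
    · exact (hFpos s h).le
  have hfnn : ∀ s : ℝ, 0 ≤ s → 0 ≤ f s := by
    intro s hs
    rcases eq_or_lt_of_le hs with h | h
    · rw [← h, hf0]
    · exact (hfpos s h).le
  have hFmono : MonotoneOn F (Ici 0) := by
    apply monotoneOn_of_deriv_nonneg (convex_Ici _) hFcont.continuousOn
    · exact fun x _ => (hFD x).differentiableAt.differentiableWithinAt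
    · intro x hx
      rw [interior_Ici] at hx
      rw [(hFD x).deriv]
      exact hfnn x hx.le
  -- the comparison function Ψ
  set Ψ : ℝ → ℝ := fun t => A * F (w t) - K (w' t) with hΨ
  have hΨD : ∀ x ∈ Ioo t₀ T, ∃ v : ℝ, HasDerivAt Ψ v x ∧ 0 ≤ v := by
    intro x hx
    have hx0T : x ∈ Ioo (0:ℝ) T := ⟨lt_of_le_of_lt ht₀0 hx.1, hx.2⟩
    have hxIcc : x ∈ Icc (0:ℝ) T := Ioo_subset_Icc_self hx0T
    have hx₀ : 0 < w' x := hw'pos x hx.1 hx.2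
    have hpx : 0 < p x := hppos x hxIcc
    have habs : |w' x| = w' x := abs_of_nonneg hx₀.le
    set dP : ℝ := p x * a x * f (w x) * l |w' x| with hdP
    set Dq : ℝ := (dP * p x - Ppw x * p' x) / (p x) ^ 2 with hDq
    have hqD : HasDerivAt (fun s => Ppw s / p s) Dq x := (hODE x hx0T).div (hpD x hx0T) hpx.ne'
    have hφw'D : HasDerivAt (fun s => φ (w' s)) Dq x := by
      have hev : (fun s => φ (w' s)) =ᶠ[nhds x] fun s => Ppw s / p s := by
        filter_upwards [Icc_mem_nhds hx0T.1 hx0T.2] with s hs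
        have hps : p s ≠ 0 := (hppos s hs).ne'
        simp only [hPpw]
        rw [mul_comm, mul_div_assoc, div_self hps, mul_one]
      exact hqD.congr_of_eventuallyEq hev
    set x₀ := w' x with hx₀def
    have hφsD : HasStrictDerivAt φ (φ' x₀) x₀ :=
      hasStrictDerivAt_of_hasDerivAt_of_continuousAt
        (Filter.eventually_of_mem (Ioi_mem_nhds hx₀) (fun y hy => hφd y hy))
        (hφ'c.continuousAt (Ioi_mem_nhds hx₀))
    have hφ'ne : φ' x₀ ≠ 0 := (hφ'pos x₀ hx₀).ne'
    have hψD : HasStrictDerivAt (HasStrictDerivAt.localInverse φ (φ' x₀) x₀ hφsD hφ'ne)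
        (φ' x₀)⁻¹ (φ x₀) := hφsD.to_localInverse hφ'ne
    have hlinv : ∀ᶠ y in nhds x₀,
        HasStrictDerivAt.localInverse φ (φ' x₀) x₀ hφsD hφ'ne (φ y) = y :=
      (hφsD.hasStrictFDerivAt_equiv hφ'ne).eventually_left_inverse
    have hw'ca : ContinuousAt w' x := (hw'c x hxIcc).continuousAt (Icc_mem_nhds hx0T.1 hx0T.2)
    have hevt : ∀ᶠ s in nhds x,
        HasStrictDerivAt.localInverse φ (φ' x₀) x₀ hφsD hφ'ne (φ (w' s)) = w' s :=
      hw'ca.eventually hlinv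
    have hcomp : HasDerivAt
        (fun s => HasStrictDerivAt.localInverse φ (φ' x₀) x₀ hφsD hφ'ne (φ (w' s)))
        ((φ' x₀)⁻¹ * Dq) x := hψD.hasDerivAt.comp x hφw'D
    have hw'D : HasDerivAt w' ((φ' x₀)⁻¹ * Dq) x :=
      hcomp.congr_of_eventuallyEq (hevt.mono fun s hs => hs.symm)
    have hKw'D : HasDerivAt (fun s => K (w' s)) (gK x₀ * ((φ' x₀)⁻¹ * Dq)) x :=
      (hKder x₀ hx₀).comp x hw'D
    have hFwD : HasDerivAt (fun s => A * F (w s)) (A * (f (w x) * w' x)) x := by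
      have h1 : HasDerivAt (fun s => F (w s)) (f (w x) * w' x) x :=
        (hFD (w x)).comp x (hwD x hx0T)
      exact h1.const_mul A
    refine ⟨A * (f (w x) * w' x) - gK x₀ * ((φ' x₀)⁻¹ * Dq), hFwD.sub hKw'D, ?_⟩
    have hlx₀ : 0 < l x₀ := hlpos x₀ hx₀.le
    have hφx₀ : 0 < φ x₀ := hφpos x₀ hx₀
    have hφ'x₀ : 0 < φ' x₀ := hφ'pos x₀ hx₀
    have hp'x : 0 ≤ p' x := hp'nn x hx0T
    have hfx : 0 ≤ f (w x) := hfwnn x hxIcc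
    have hax : a x ≤ A := hAa x hxIcc
    have hax0 : 0 < a x := hapos x hxIcc
    have hDqval : Dq = a x * f (w x) * l x₀ - φ x₀ * p' x / p x := by
      rw [hDq, hdP]
      simp only [hPpw]
      rw [habs]
      field_simp
      ring
    have hDqle : Dq ≤ a x * f (w x) * l x₀ := by
      rw [hDqval]
      have h0 : 0 ≤ φ x₀ * p' x / p x := by positivity
      linarith
    have hstep1 : gK x₀ * ((φ' x₀)⁻¹ * Dq)
        ≤ gK x₀ * ((φ' x₀)⁻¹ * (a x * f (w x) * l x₀)) := by
      apply mul_le_mul_of_nonneg_left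
        (mul_le_mul_of_nonneg_left hDqle (inv_nonneg.mpr hφ'x₀.le)) (hgnn x₀ hx₀.le)
    have hstep2 : gK x₀ * ((φ' x₀)⁻¹ * (a x * f (w x) * l x₀)) = a x * f (w x) * x₀ := by
      show x₀ * φ' x₀ / l x₀ * ((φ' x₀)⁻¹ * (a x * f (w x) * l x₀)) = a x * f (w x) * x₀
      field_simp
    have hstep3 : a x * f (w x) * x₀ ≤ A * (f (w x) * x₀) := by
      nlinarith [mul_nonneg hfx hx₀.le]
    rw [hstep2] at hstep1
    linarith
  have hΨmono : MonotoneOn Ψ (Icc t₀ T) := by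
    apply monotoneOn_of_deriv_nonneg (convex_Icc _ _)
    · apply ContinuousOn.sub
      · exact continuousOn_const.mul
          (hFcont.comp_continuousOn (hwc.mono (Icc_subset_Icc ht₀0 le_rfl)))
      · apply (hKcontOn M).comp (hw'c.mono (Icc_subset_Icc ht₀0 le_rfl))
        intro t ht
        exact ⟨hw'nn t (Icc_subset_Icc ht₀0 le_rfl ht), hMw' t (Icc_subset_Icc ht₀0 le_rfl ht)⟩
    · rw [interior_Icc]
      intro t ht
      obtain ⟨v, hv, _⟩ := hΨD t ht
      exact hv.differentiableAt.differentiableWithinAt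
    · rw [interior_Icc]
      intro t ht
      obtain ⟨v, hv, hv0⟩ := hΨD t ht
      rw [hv.deriv]
      exact hv0
  have hKey : ∀ t ∈ Icc t₀ T, K (w' t) ≤ A * F (w t) := by
    intro t ht
    have h1 : Ψ t₀ ≤ Ψ t := hΨmono (left_mem_Icc.mpr ht₀Icc.2) ht ht.1
    have h2 : Ψ t₀ = 0 := by
      simp only [hΨ]
      rw [hwt₀, hw't₀, hF0, hK0]
      ring
    rw [h2] at h1
    simp only [hΨ] at h1
    linarith
  -- choice of n and θ via the C-increasing property
  have hC0 : (0:ℝ) < C := lt_of_lt_of_le one_pos hC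
  have h1c : (1:ℝ) < 1 + C⁻¹ * C⁻¹ := by
    have : 0 < C⁻¹ * C⁻¹ := by positivity
    linarith
  obtain ⟨n, hn⟩ := pow_unbounded_of_one_lt A h1c
  set θ : ℝ := 1 / 2 ^ n with hθdef
  have hθ0 : 0 < θ := by positivity
  have hAF : ∀ s ∈ Ioo (0:ℝ) η₀, A * F (θ * s) ≤ F s := by
    intro s hs
    have h1 := aux_F_iter C η₀ hC f hfc hf0 hfnn hfCinc F hF hFnn n s hs
    have heq : θ * s = s / 2 ^ n := by rw [hθdef]; ring
    rw [heq]
    calc A * F (s / 2 ^ n) ≤ (1 + C⁻¹ * C⁻¹) ^ n * F (s / 2 ^ n) :=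
          mul_le_mul_of_nonneg_right hn.le (hFnn _ (div_nonneg hs.1.le (by positivity)))
      _ ≤ F s := h1
  -- pick ρ with F ρ < K 1 and ρ < η₀
  have hK1 : 0 < K 1 := by
    have h := hKsm (self_mem_Ici) (mem_Ici.mpr zero_le_one) one_pos
    rwa [hK0] at h
  have hev : ∀ᶠ s in nhds (0:ℝ), F s < K 1 :=
    (hFcont.continuousAt).eventually_lt continuousAt_const (by rw [hF0]; exact hK1)
  obtain ⟨δ, hδ0, hδ⟩ := Metric.eventually_nhds_iff.mp hev
  set ρ : ℝ := min (δ / 2) (η₀ / 2) with hρdef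
  have hρ0 : 0 < ρ := by positivity
  have hρη : ρ < η₀ := lt_of_le_of_lt (min_le_right _ _) (by linarith)
  have hρδ : ρ < δ := lt_of_le_of_lt (min_le_left _ _) (by linarith)
  have hFρ : F ρ < K 1 := by
    apply hδ
    rw [Real.dist_eq, sub_zero, abs_of_pos hρ0]
    exact hρδ
  -- pick T₁ close to t₀ with w T₁ < θ * ρ
  have hevw : ∀ᶠ s in nhdsWithin t₀ (Ioo t₀ T), w s < θ * ρ := by
    have h1 : Filter.Tendsto w (nhdsWithin t₀ (Icc 0 T)) (nhds 0) := by
      have h0 : Filter.Tendsto w (nhdsWithin t₀ (Icc 0 T)) (nhds (w t₀)) := hwc t₀ ht₀Icc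
      rwa [hwt₀] at h0
    have h2 : nhdsWithin t₀ (Ioo t₀ T) ≤ nhdsWithin t₀ (Icc 0 T) :=
      nhdsWithin_mono _ (fun s hs => ⟨le_trans ht₀0 hs.1.le, hs.2.le⟩)
    have h3 := h1.mono_left h2
    exact h3.eventually (Filter.eventually_of_mem (Iio_mem_nhds (mul_pos hθ0 hρ0)) (fun y hy => hy))
  have hne : (nhdsWithin t₀ (Ioo t₀ T)).NeBot := left_nhdsWithin_Ioo_neBot ht₀T
  obtain ⟨T₁, hwT₁, hT₁mem⟩ := (hevw.and eventually_mem_nhdsWithin).exists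
  have hT₁0 : t₀ < T₁ := hT₁mem.1
  have hT₁T : T₁ < T := hT₁mem.2
  have hwT₁pos : 0 < w T₁ := hwpos T₁ hT₁0 hT₁T.le
  set ε : ℝ := w T₁ / θ with hεdef
  have hε0 : 0 < ε := by positivity
  have hερ : ε < ρ := by
    rw [hεdef, div_lt_iff₀ hθ0]
    calc w T₁ < θ * ρ := hwT₁
      _ = ρ * θ := mul_comm _ _
  have hεη : ε < η₀ := lt_trans hερ hρη
  have hIccsub : Icc t₀ T₁ ⊆ Icc (0:ℝ) T := Icc_subset_Icc ht₀0 hT₁T.le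
  -- strict monotonicity of w on [t₀, T₁]
  have hwsm : StrictMonoOn w (Icc t₀ T₁) := by
    apply strictMonoOn_of_deriv_pos (convex_Icc _ _) (hwc.mono hIccsub)
    rw [interior_Icc]
    intro s hs
    rw [(hwD s ⟨lt_of_le_of_lt ht₀0 hs.1, lt_trans hs.2 hT₁T⟩).deriv]
    exact hw'pos s hs.1 (lt_trans hs.2 hT₁T)
  -- the monotone comparison function m
  set clamp : ℝ → ℝ := fun t => min (max t t₀) T₁ with hclamp
  have hclampmem : ∀ t : ℝ, clamp t ∈ Icc t₀ T₁ := fun t =>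
    ⟨le_min (le_max_right _ _) hT₁0.le, min_le_right _ _⟩
  have hclampmono : Monotone clamp := fun s t hst =>
    min_le_min (max_le_max hst le_rfl) le_rfl
  set G : ℝ → ℝ := fun t => w (clamp t) / θ with hG
  have hGmono : Monotone G := by
    intro s t hst
    exact (div_le_div_iff_of_pos_right hθ0).mpr
      (hwmono (hIccsub (hclampmem s)) (hIccsub (hclampmem t)) (hclampmono hst))
  have hGnn : ∀ t, 0 ≤ G t := fun t => div_nonneg (hwnn _ (hIccsub (hclampmem t))) hθ0.le
  set m : ℝ → ℝ := fun t => sSup {y | y ∈ Icc (0:ℝ) 1 ∧ K y ≤ F (G t)} with hm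
  have hsetne : ∀ t : ℝ, (0:ℝ) ∈ {y | y ∈ Icc (0:ℝ) 1 ∧ K y ≤ F (G t)} := fun t =>
    ⟨⟨le_rfl, zero_le_one⟩, by rw [hK0]; exact hFnn _ (hGnn t)⟩
  have hsetbdd : ∀ t : ℝ, BddAbove {y | y ∈ Icc (0:ℝ) 1 ∧ K y ≤ F (G t)} := fun t =>
    ⟨1, fun y hy => hy.1.2⟩
  have hmmono : Monotone m := by
    intro s t hst
    apply csSup_le_csSup (hsetbdd t) ⟨0, hsetne s⟩
    intro y hy
    exact ⟨hy.1, le_trans hy.2 (hFmono (hGnn s) (hGnn t) (hGmono hst))⟩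
  have hmmeas : Measurable m := hmmono.measurable
  -- pointwise facts on (t₀, T₁)
  have hKc01 : ContinuousOn K (Icc 0 1) := hKcontOn 1
  have hmain : ∀ x ∈ Ioo t₀ T₁,
      w' x ≤ m x ∧ 0 < m x ∧ Kinv (F (w x / θ)) = m x := by
    intro x hx
    have hxI : x ∈ Icc t₀ T₁ := Ioo_subset_Icc_self hx
    have hxIcc : x ∈ Icc (0:ℝ) T := hIccsub hxI
    have hclampx : clamp x = x := by
      rw [hclamp]
      simp only
      rw [max_eq_left hx.1.le, min_eq_left hx.2.le]
    have hGx : G x = w x / θ := by rw [hG]; simp only [hclampx]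
    have hwxpos : 0 < w x := hwpos x hx.1 (le_trans hx.2.le hT₁T.le)
    have hs0 : 0 < w x / θ := by positivity
    have hsε : w x / θ < ε := by
      rw [hεdef]
      exact (div_lt_div_iff_of_pos_right hθ0).mpr
        (hwsm hxI (right_mem_Icc.mpr hT₁0.le) hx.2)
    have hsη : w x / θ < η₀ := lt_trans hsε hεη
    have hFs_le : F (w x / θ) ≤ K 1 :=
      le_trans (hFmono hs0.le hρ0.le (le_of_lt (lt_trans hsε hερ))) hFρ.le
    have hFs_mem : F (w x / θ) ∈ Icc (K 0) (K 1) :=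
      ⟨by rw [hK0]; exact hFnn _ hs0.le, hFs_le⟩
    obtain ⟨b, hb01, hKb⟩ := intermediate_value_Icc zero_le_one hKc01 hFs_mem
    have hFspos : 0 < F (w x / θ) := hFpos _ hs0
    have hbpos : 0 < b := by
      rcases eq_or_lt_of_le hb01.1 with h | h
      · exfalso; rw [← h, hK0] at hKb; linarith
      · exact h
    have hseteq : {y | y ∈ Icc (0:ℝ) 1 ∧ K y ≤ F (G x)} = Icc 0 b := by
      ext y
      simp only [mem_setOf_eq, mem_Icc, hGx]
      constructor
      · rintro ⟨⟨hy0, hy1⟩, hyK⟩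
        refine ⟨hy0, ?_⟩
        rw [← hKb] at hyK
        exact (hKsm.le_iff_le (mem_Ici.mpr hy0) (mem_Ici.mpr hb01.1)).mp hyK
      · rintro ⟨hy0, hyb⟩
        refine ⟨⟨hy0, le_trans hyb hb01.2⟩, ?_⟩
        rw [← hKb]
        exact (hKsm.le_iff_le (mem_Ici.mpr hy0) (mem_Ici.mpr hb01.1)).mpr hyb
    have hmx : m x = b := by
      rw [hm]
      simp only
      rw [hseteq]
      exact csSup_Icc hb01.1
    have hKinvFs : Kinv (F (w x / θ)) = m x := by
      rw [← hKb, hKinv b hb01.1, hmx]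
    have hw'le : w' x ≤ m x := by
      have h1 : K (w' x) ≤ A * F (w x) := hKey x ⟨hx.1.le, le_trans hx.2.le hT₁T.le⟩
      have h2 : A * F (w x) ≤ F (w x / θ) := by
        have h3 := hAF (w x / θ) ⟨hs0, hsη⟩
        have h4 : θ * (w x / θ) = w x := by
          rw [mul_comm, div_mul_cancel₀ _ hθ0.ne']
        rwa [h4] at h3
      have h5 : K (w' x) ≤ K b := by rw [hKb]; linarith
      rw [hmx]
      exact (hKsm.le_iff_le (mem_Ici.mpr (hw'nn x hxIcc)) (mem_Ici.mpr hb01.1)).mp h5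
    exact ⟨hw'le, hmx ▸ hbpos, hKinvFs⟩
  -- change of variables
  have hmeasS : MeasurableSet (Ioo t₀ T₁) := measurableSet_Ioo
  set gmap : ℝ → ℝ := fun t => w t / θ with hgmap
  have hder : ∀ x ∈ Ioo t₀ T₁, HasDerivWithinAt gmap (w' x / θ) (Ioo t₀ T₁) x := by
    intro x hx
    exact ((hwd x (hIccsub (Ioo_subset_Icc_self hx))).mono
      (subset_trans Ioo_subset_Icc_self hIccsub)).div_const θ
  have hinj : InjOn gmap (Ioo t₀ T₁) := by
    intro u hu v hv huv
    have h : w u = w v := by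
      have h2 : w u / θ = w v / θ := huv
      have h3 := congrArg (fun z : ℝ => z * θ) h2
      rwa [div_mul_cancel₀ _ hθ0.ne', div_mul_cancel₀ _ hθ0.ne'] at h3
    exact hwsm.injOn (Ioo_subset_Icc_self hu) (Ioo_subset_Icc_self hv) h
  have himg : gmap '' Ioo t₀ T₁ = Ioo 0 ε := by
    apply Subset.antisymm
    · rintro _ ⟨x, hx, rfl⟩
      have hwxpos : 0 < w x := hwpos x hx.1 (le_trans hx.2.le hT₁T.le)
      constructor
      · show 0 < w x / θ
        positivity
      · show w x / θ < ε
        rw [hεdef]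
        exact (div_lt_div_iff_of_pos_right hθ0).mpr (hwsm (Ioo_subset_Icc_self hx)
          (right_mem_Icc.mpr hT₁0.le) hx.2)
    · have hgc' : ContinuousOn gmap (Icc t₀ T₁) := (hwc.mono hIccsub).div_const θ
      have h1 := intermediate_value_Ioo hT₁0.le hgc'
      have h2 : gmap t₀ = 0 := by simp only [hgmap]; rw [hwt₀]; simp
      have h3 : gmap T₁ = ε := by simp only [hgmap, hεdef]
      rw [h2, h3] at h1
      exact h1
  refine ⟨ε, ⟨hε0, hεη⟩, ?_⟩
  have hiff := integrableOn_image_iff_integrableOn_abs_deriv_smul hmeasS hder hinj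
    (fun s => 1 / Kinv (F s))
  rw [himg] at hiff
  rw [hiff]
  -- the transported integrand is measurable and bounded
  have haes : AEStronglyMeasurable (fun x => (w' x / θ) * (m x)⁻¹)
      (volume.restrict (Ioo t₀ T₁)) := by
    have h1 : AEMeasurable w' (volume.restrict (Ioo t₀ T₁)) :=
      (hw'c.mono (subset_trans Ioo_subset_Icc_self hIccsub)).aemeasurable hmeasS
    exact ((h1.div_const θ).mul (hmmeas.inv.aemeasurable)).aestronglyMeasurable
  have heqon : ∀ x ∈ Ioo t₀ T₁,
      (w' x / θ) * (m x)⁻¹ = |w' x / θ| • (1 / Kinv (F (gmap x))) := by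
    intro x hx
    obtain ⟨hle, hpos, hKi⟩ := hmain x hx
    have hxIcc : x ∈ Icc (0:ℝ) T := hIccsub (Ioo_subset_Icc_self hx)
    have habs : |w' x / θ| = w' x / θ :=
      abs_of_nonneg (div_nonneg (hw'nn x hxIcc) hθ0.le)
    simp only [hgmap]
    rw [hKi, habs, smul_eq_mul, one_div]
  refine ⟨?_, ?_⟩
  · exact haes.congr ((ae_restrict_iff' hmeasS).mpr
      (Filter.Eventually.of_forall (fun x hx => heqon x hx)))
  · apply HasFiniteIntegral.restrict_of_bounded (C := 1 / θ) measure_Ioo_lt_top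
    rw [ae_restrict_iff' hmeasS]
    apply Filter.Eventually.of_forall
    intro x hx
    obtain ⟨hle, hpos, hKi⟩ := hmain x hx
    have hxIcc : x ∈ Icc (0:ℝ) T := hIccsub (Ioo_subset_Icc_self hx)
    have hval : |w' x / θ| • (1 / Kinv (F (gmap x))) = (w' x / θ) * (m x)⁻¹ :=
      (heqon x hx).symm
    rw [hval, Real.norm_eq_abs,
      abs_of_nonneg (mul_nonneg (div_nonneg (hw'nn x hxIcc) hθ0.le) (inv_nonneg.mpr hpos.le))]
    have h1 : w' x / θ * (m x)⁻¹ ≤ m x / θ * (m x)⁻¹ :=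
      mul_le_mul_of_nonneg_right ((div_le_div_iff_of_pos_right hθ0).mpr hle) (inv_nonneg.mpr hpos.le)
    have h2 : m x / θ * (m x)⁻¹ = (m x)⁻¹ * m x * (1 / θ) := by ring
    rw [inv_mul_cancel₀ hpos.ne', one_mul] at h2
    linarith
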